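/- arXiv:1903.08747 — 3 statements merged into one kernel-verified Lean document; each statement's English description precedes it below -/
import Mathlib

section
/- Fix N₀ ≥ 0, T ≥ 0, β ∈ (0,1). If V is a random variable with 0 ≤ V ≤ N₀ and V ≤_st Binomial(N₀, 1-β), and B ≥ N₀ - V almost surely, then E[((1-β)/β)·B/(V+T)] ≥ E[V/(V+T)], provided V + T > 0 almost surely. -/
open MeasureTheory Finset

/-- `ℙ[Binomial(n, p) ≥ t]` for a natural threshold `t`. -/
noncomputable def binomTail (n : ℕ) (p : ℝ) (t : ℕ) : ℝ :=
  ∑ k ∈ Finset.Icc t n, (n.choose k : ℝ) * p ^ k * (1 - p) ^ (n - k)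

section FdpAux

lemma fdp_sum_repr {Ω : Type*} [MeasurableSpace Ω] (μ : Measure Ω) [IsProbabilityMeasure μ]
    (n : ℕ) (V : Ω → ℕ) (hV : Measurable V) (hVn : ∀ ω, V ω ≤ n) (h : ℕ → ℝ) :
    Integrable (fun ω => h (V ω)) μ ∧
      ∫ ω, h (V ω) ∂μ = ∑ k ∈ range (n+1), (μ {ω | V ω = k}).toReal * h k := by
  have hmeas : ∀ k : ℕ, MeasurableSet {ω | V ω = k} :=
    fun k => hV (measurableSet_singleton k)
  have hfun : (fun ω => h (V ω)) =
      fun ω => ∑ k ∈ range (n+1), Set.indicator {ω' | V ω' = k} (fun _ => h k) ω := by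
    funext ω
    rw [Finset.sum_eq_single_of_mem (V ω) (mem_range.2 (Nat.lt_succ_of_le (hVn ω)))]
    · rw [Set.indicator_of_mem (by simp : ω ∈ {ω' | V ω' = V ω})]
    · intro b _ hb
      exact Set.indicator_of_notMem (fun hmem => hb (Set.mem_setOf_eq.mp hmem).symm) _
  have hintk : ∀ k ∈ range (n+1),
      Integrable (fun ω => Set.indicator {ω' | V ω' = k} (fun _ => h k) ω) μ :=
    fun k _ => (integrable_const (h k)).indicator (hmeas k)
  constructor
  · rw [hfun]; exact integrable_finset_sum _ hintk
  · rw [hfun, integral_finset_sum _ hintk]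
    refine Finset.sum_congr rfl fun k _ => ?_
    rw [integral_indicator_const (h k) (hmeas k), smul_eq_mul]; rfl

lemma fdp_binom_sum_one (n : ℕ) (x : ℝ) :
    ∑ k ∈ range (n+1), (n.choose k : ℝ) * x^k * (1-x)^(n-k) = 1 := by
  have h : (x + (1-x))^n = ∑ k ∈ range (n+1), x^k*(1-x)^(n-k)*(n.choose k : ℝ) :=
    add_pow x (1-x) n
  simp only [add_sub_cancel, one_pow] at h
  calc ∑ k ∈ range (n+1), (n.choose k:ℝ)*x^k*(1-x)^(n-k)
      = ∑ k ∈ range (n+1), x^k*(1-x)^(n-k)*(n.choose k:ℝ) :=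
        Finset.sum_congr rfl fun k _ => by ring
    _ = 1 := h.symm

lemma fdp_binom_mean (n : ℕ) (x : ℝ) :
    ∑ k ∈ range (n+1), (k:ℝ) * ((n.choose k : ℝ) * x^k * (1-x)^(n-k)) = n * x := by
  cases n with
  | zero => simp
  | succ m =>
    rw [Finset.sum_range_succ']
    simp only [Nat.cast_zero, zero_mul, add_zero]
    have key : ∀ j ∈ range (m+1),
        ((j+1:ℕ):ℝ) * (((m+1).choose (j+1) : ℝ) * x^(j+1) * (1-x)^(m+1-(j+1)))
          = ((m+1:ℕ):ℝ) * x * ((m.choose j : ℝ) * x^j * (1-x)^(m-j)) := by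
      intro j _
      have h := Nat.add_one_mul_choose_eq m j
      have h' : ((m+1:ℕ):ℝ) * (m.choose j : ℝ) = ((m+1).choose (j+1) : ℝ) * ((j+1:ℕ):ℝ) := by
        exact_mod_cast congrArg (Nat.cast (R := ℝ)) h
      rw [Nat.succ_sub_succ]
      push_cast at h' ⊢
      rw [pow_succ]
      linear_combination (-(x ^ j * x * (1 - x) ^ (m - j))) * h'
    rw [Finset.sum_congr rfl key, ← Finset.mul_sum, fdp_binom_sum_one m x]
    push_cast
    ring

lemma fdp_binomTail_zero (n : ℕ) (x : ℝ) : binomTail n x 0 = 1 := by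
  rw [binomTail, show Finset.Icc 0 n = range (n+1) by ext k; simp [Nat.lt_succ_iff]]
  exact fdp_binom_sum_one n x

lemma fdp_binomTail_top (n : ℕ) (x : ℝ) : binomTail n x (n+1) = 0 := by
  rw [binomTail, Finset.Icc_eq_empty (by omega), Finset.sum_empty]

lemma fdp_binomTail_succ (n : ℕ) (x : ℝ) (t : ℕ) (ht : t ≤ n) :
    binomTail n x t = (n.choose t : ℝ) * x^t * (1-x)^(n-t) + binomTail n x (t+1) := by
  rw [binomTail, binomTail, Finset.Icc_eq_cons_Ioc ht, Finset.sum_cons,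
    ← Finset.Icc_add_one_left_eq_Ioc]

lemma fdp_binomTail_nonneg (n : ℕ) (x : ℝ) (t : ℕ) (h0 : 0 ≤ x) (h1 : x ≤ 1) :
    0 ≤ binomTail n x t := by
  refine Finset.sum_nonneg fun k _ => ?_
  have : (0:ℝ) ≤ 1 - x := by linarith
  positivity

lemma fdp_abel (n : ℕ) (φ d : ℕ → ℝ) (hd0 : d 0 = 0) (hdtop : d (n+1) = 0)
    (hdneg : ∀ t, d t ≤ 0) (hmono : ∀ j, φ (j+1) ≤ φ j) :
    0 ≤ ∑ k ∈ range (n+1), φ k * (d k - d (k+1)) := by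
  have e1 : ∑ k ∈ range (n+1), φ k * d k = ∑ j ∈ range n, φ (j+1) * d (j+1) := by
    rw [Finset.sum_range_succ']; simp [hd0]
  have e2 : ∑ k ∈ range (n+1), φ k * d (k+1) = ∑ j ∈ range n, φ j * d (j+1) := by
    rw [Finset.sum_range_succ]; simp [hdtop]
  have key : ∑ k ∈ range (n+1), φ k * (d k - d (k+1))
      = ∑ j ∈ range n, (φ (j+1) - φ j) * d (j+1) := by
    simp only [mul_sub, sub_mul]
    rw [Finset.sum_sub_distrib, e1, e2, ← Finset.sum_sub_distrib]
  rw [key]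
  exact Finset.sum_nonneg fun j _ =>
    mul_nonneg_of_nonpos_of_nonpos (by linarith [hmono j]) (hdneg _)

lemma fdp_core (n : ℕ) (T β : ℝ) (hβ0 : 0 < β) (hβ1 : β < 1) (hT : 0 < T)
    (p : ℕ → ℝ) (hp : ∀ k ∈ range (n+1), 0 ≤ p k)
    (hsum : ∑ k ∈ range (n+1), p k = 1)
    (hmean : ∑ k ∈ range (n+1), (k:ℝ) * p k = n * (1-β)) :
    0 ≤ ∑ k ∈ range (n+1),
      (((1-β)*n + T)/(β*((k:ℝ)+T)) - 1/β) * p k := by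
  set A : ℝ := (1-β)*n + T with hA
  have hApos : 0 < A := by
    have h1 : (0:ℝ) ≤ (1-β)*n := mul_nonneg (by linarith) (Nat.cast_nonneg n)
    rw [hA]; linarith
  have hden : ∀ k : ℕ, (0:ℝ) < (k:ℝ) + T := fun k => by positivity
  set G : ℝ := ∑ k ∈ range (n+1), p k / ((k:ℝ)+T) with hG
  have hCS : (1:ℝ) ≤ A * G := by
    have h := Finset.sum_sq_le_sum_mul_sum_of_sq_eq_mul (range (n+1))
      (r := p) (f := fun k => p k * ((k:ℝ)+T)) (g := fun k => p k / ((k:ℝ)+T))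
      (fun k hk => mul_nonneg (hp k hk) (hden k).le)
      (fun k hk => div_nonneg (hp k hk) (hden k).le)
      (fun k hk => by field_simp)
    rw [hsum, one_pow] at h
    have hfsum : ∑ k ∈ range (n+1), p k * ((k:ℝ)+T) = A := by
      have : ∑ k ∈ range (n+1), p k * ((k:ℝ)+T)
          = ∑ k ∈ range (n+1), ((k:ℝ) * p k + T * p k) := by
        refine Finset.sum_congr rfl fun k _ => by ring
      rw [this, Finset.sum_add_distrib, hmean, ← Finset.mul_sum, hsum, hA]
      ring
    rw [hfsum] at h
    exact h
  have hrw : ∑ k ∈ range (n+1), (A/(β*((k:ℝ)+T)) - 1/β) * p k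
      = A/β * G - 1/β := by
    have : ∀ k ∈ range (n+1), (A/(β*((k:ℝ)+T)) - 1/β) * p k
        = A/β * (p k / ((k:ℝ)+T)) - 1/β * p k := by
      intro k _
      field_simp
    rw [Finset.sum_congr rfl this, Finset.sum_sub_distrib, ← Finset.mul_sum,
      ← Finset.mul_sum, hsum, hG, mul_one]
  rw [hrw, show A/β * G - 1/β = (A*G - 1)/β by ring]
  exact div_nonneg (by linarith) hβ0.le

end FdpAux

/-- Conservativeness of the external-comparison directional FDP estimator.
Fix `N₀ ≥ 0`, `T ≥ 0`, `β ∈ (0,1)`.  If `V` is a random variable with `0 ≤ V ≤ N₀`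
and `V ≤_st Binomial(N₀, 1-β)`, `B ≥ N₀ - V` almost surely, and `V + T > 0` almost
surely, then `E[((1-β)/β)·B/(V+T)] ≥ E[V/(V+T)]`. -/
theorem external_fdp_estimator_conservative {Ω : Type*} [MeasurableSpace Ω]
    (μ : Measure Ω) [IsProbabilityMeasure μ]
    (N₀ : ℕ) (T β : ℝ) (hβ0 : 0 < β) (hβ1 : β < 1) (hT : 0 ≤ T)
    (V : Ω → ℕ) (hVmeas : Measurable V) (hVN : ∀ ω, V ω ≤ N₀)
    (hVdom : ∀ t : ℕ, μ {ω | t ≤ V ω} ≤ ENNReal.ofReal (binomTail N₀ (1 - β) t))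
    (B : Ω → ℝ) (hBmeas : Measurable B)
    (hB : ∀ᵐ ω ∂μ, (N₀ : ℝ) - V ω ≤ B ω)
    (hpos : ∀ᵐ ω ∂μ, 0 < (V ω : ℝ) + T)
    (hint1 : Integrable (fun ω => ((1 - β) / β) * B ω / ((V ω : ℝ) + T)) μ)
    (hint2 : Integrable (fun ω => (V ω : ℝ) / ((V ω : ℝ) + T)) μ) :
    ∫ ω, (V ω : ℝ) / ((V ω : ℝ) + T) ∂μ
      ≤ ∫ ω, ((1 - β) / β) * B ω / ((V ω : ℝ) + T) ∂μ := by
  rcases hT.lt_or_eq with hTpos | hT0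
  swap
  · -- T = 0 is impossible
    exfalso
    subst hT0
    have h1 : ∀ᵐ ω ∂μ, ω ∈ {ω | 1 ≤ V ω} := by
      filter_upwards [hpos] with ω hω
      have h' : (0:ℝ) < (V ω : ℝ) := by simpa using hω
      have h'' : 0 < V ω := by exact_mod_cast h'
      exact h''
    have hc0 : μ {ω | 1 ≤ V ω}ᶜ = 0 := MeasureTheory.ae_iff.mp h1
    have hone : μ {ω | 1 ≤ V ω} = 1 := by
      have hm : MeasurableSet {ω | 1 ≤ V ω} := hVmeas measurableSet_Ici
      have := measure_add_measure_compl (μ := μ) hm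
      rw [hc0, add_zero, measure_univ] at this
      exact this
    have h2 := hVdom 1
    rw [hone] at h2
    have h3 : binomTail N₀ (1-β) 1 = 1 - β^N₀ := by
      have h4 := fdp_binomTail_succ N₀ (1-β) 0 (Nat.zero_le _)
      rw [fdp_binomTail_zero] at h4
      simp only [Nat.choose_zero_right, Nat.cast_one, pow_zero, Nat.sub_zero,
        sub_sub_cancel, one_mul, mul_one] at h4
      linarith
    have h6 : β ^ N₀ ≤ 1 := pow_le_one₀ hβ0.le hβ1.le
    have h5 : ENNReal.ofReal (1 - β^N₀) < 1 := by
      rw [← ENNReal.ofReal_one]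
      apply ENNReal.ofReal_lt_ofReal_iff_of_nonneg (by linarith) |>.2
      have := pow_pos hβ0 N₀
      linarith
    rw [h3] at h2
    exact absurd (lt_of_le_of_lt h2 h5) (lt_irrefl 1)
  -- main case : 0 < T
  have hden : ∀ k : ℕ, (0:ℝ) < (k:ℝ) + T := fun k => by positivity
  obtain ⟨hintg, hreprg⟩ := fdp_sum_repr μ N₀ V hVmeas hVN
    (fun k => (1-β)/β * ((N₀:ℝ) - k)/((k:ℝ)+T))
  obtain ⟨hinth, hreprh⟩ := fdp_sum_repr μ N₀ V hVmeas hVN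
    (fun k => (k:ℝ)/((k:ℝ)+T))
  have hqmeas : ∀ t : ℕ, MeasurableSet {ω | t ≤ V ω} := fun t => hVmeas measurableSet_Ici
  -- m k = q k - q (k+1)
  have hmq : ∀ k : ℕ, (μ {ω | V ω = k}).toReal
      = (μ {ω | k ≤ V ω}).toReal - (μ {ω | k+1 ≤ V ω}).toReal := by
    intro k
    have hun : {ω | k ≤ V ω} = {ω | V ω = k} ∪ {ω | k+1 ≤ V ω} := by
      ext ω; simp only [Set.mem_setOf_eq, Set.mem_union]; omega
    have hdisj : Disjoint {ω | V ω = k} {ω | k+1 ≤ V ω} := by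
      rw [Set.disjoint_left]
      intro ω h1 h2
      simp only [Set.mem_setOf_eq] at h1 h2
      omega
    have : μ ({ω | V ω = k} ∪ {ω | k+1 ≤ V ω}) = μ {ω | V ω = k} + μ {ω | k+1 ≤ V ω} :=
      measure_union hdisj (hqmeas (k+1))
    rw [← hun] at this
    rw [this, ENNReal.toReal_add (measure_ne_top μ _) (measure_ne_top μ _)]
    ring
  -- d properties
  have hd0 : (μ {ω | 0 ≤ V ω}).toReal - binomTail N₀ (1-β) 0 = 0 := by
    rw [fdp_binomTail_zero,
      show {ω | 0 ≤ V ω} = Set.univ by ext ω; simp, measure_univ]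
    simp
  have hdtop : (μ {ω | N₀+1 ≤ V ω}).toReal - binomTail N₀ (1-β) (N₀+1) = 0 := by
    rw [fdp_binomTail_top,
      show {ω | N₀+1 ≤ V ω} = (∅ : Set Ω) by
        ext ω; simp only [Set.mem_setOf_eq, Set.mem_empty_iff_false, iff_false]
        have := hVN ω; omega,
      measure_empty]
    simp
  have hdneg : ∀ t : ℕ, (μ {ω | t ≤ V ω}).toReal - binomTail N₀ (1-β) t ≤ 0 := by
    intro t
    have hbn := fdp_binomTail_nonneg N₀ (1-β) t (by linarith) (by linarith)
    have hle : (μ {ω | t ≤ V ω}).toReal ≤ (ENNReal.ofReal (binomTail N₀ (1-β) t)).toReal :=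
      ENNReal.toReal_mono ENNReal.ofReal_ne_top (hVdom t)
    rw [ENNReal.toReal_ofReal hbn] at hle
    linarith
  have hmono : ∀ j : ℕ,
      ((1-β)*(N₀:ℝ) + T)/(β*(((j+1:ℕ):ℝ)+T)) - 1/β
        ≤ ((1-β)*(N₀:ℝ) + T)/(β*((j:ℝ)+T)) - 1/β := by
    intro j
    have hAnn : (0:ℝ) ≤ (1-β)*(N₀:ℝ) + T := by
      have := mul_nonneg (by linarith : (0:ℝ) ≤ 1-β) (Nat.cast_nonneg N₀)
      linarith
    apply sub_le_sub_right
    apply div_le_div_of_nonneg_left hAnn (by positivity)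
    push_cast
    nlinarith [hden j, hβ0]
  -- the chain
  calc ∫ ω, (V ω : ℝ) / ((V ω : ℝ) + T) ∂μ
      = ∑ k ∈ range (N₀+1), (μ {ω | V ω = k}).toReal * ((k:ℝ)/((k:ℝ)+T)) := hreprh
    _ ≤ ∑ k ∈ range (N₀+1), (μ {ω | V ω = k}).toReal
          * ((1-β)/β * ((N₀:ℝ) - k)/((k:ℝ)+T)) := by
        rw [← sub_nonneg, ← Finset.sum_sub_distrib]
        have hφeq : ∀ k ∈ range (N₀+1),
            (μ {ω | V ω = k}).toReal * ((1-β)/β * ((N₀:ℝ) - k)/((k:ℝ)+T))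
              - (μ {ω | V ω = k}).toReal * ((k:ℝ)/((k:ℝ)+T))
            = (((1-β)*(N₀:ℝ) + T)/(β*((k:ℝ)+T)) - 1/β) * (μ {ω | V ω = k}).toReal := by
          intro k _
          have hd := hden k
          field_simp
          ring
        rw [Finset.sum_congr rfl hφeq]
        have habel := fdp_abel N₀
          (fun k => ((1-β)*(N₀:ℝ) + T)/(β*((k:ℝ)+T)) - 1/β)
          (fun t => (μ {ω | t ≤ V ω}).toReal - binomTail N₀ (1-β) t)
          hd0 hdtop hdneg hmono
        have hsplit : ∀ k ∈ range (N₀+1),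
            (((1-β)*(N₀:ℝ) + T)/(β*((k:ℝ)+T)) - 1/β)
              * (((μ {ω | k ≤ V ω}).toReal - binomTail N₀ (1-β) k)
                - ((μ {ω | k+1 ≤ V ω}).toReal - binomTail N₀ (1-β) (k+1)))
            = (((1-β)*(N₀:ℝ) + T)/(β*((k:ℝ)+T)) - 1/β) * (μ {ω | V ω = k}).toReal
              - (((1-β)*(N₀:ℝ) + T)/(β*((k:ℝ)+T)) - 1/β)
                * ((N₀.choose k : ℝ) * (1-β)^k * (1-(1-β))^(N₀-k)) := by
          intro k hk
          have hkn : k ≤ N₀ := Nat.lt_succ_iff.mp (mem_range.mp hk)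
          have hbs := fdp_binomTail_succ N₀ (1-β) k hkn
          rw [hmq k, hbs]
          ring
        rw [Finset.sum_congr rfl hsplit, Finset.sum_sub_distrib] at habel
        have hcore := fdp_core N₀ T β hβ0 hβ1 hTpos
          (fun k => (N₀.choose k : ℝ) * (1-β)^k * (1-(1-β))^(N₀-k))
          (fun k _ => by
            have h1 : (0:ℝ) ≤ 1-β := by linarith
            have h2 : (0:ℝ) ≤ 1-(1-β) := by linarith
            positivity)
          (fdp_binom_sum_one N₀ (1-β))
          (fdp_binom_mean N₀ (1-β))
        linarith
    _ = ∫ ω, (1-β)/β * ((N₀:ℝ) - V ω)/((V ω:ℝ)+T) ∂μ := hreprg.symm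
    _ ≤ ∫ ω, ((1 - β) / β) * B ω / ((V ω : ℝ) + T) ∂μ := by
        refine integral_mono_ae hintg hint1 ?_
        filter_upwards [hB] with ω hω
        have hd : (0:ℝ) < (V ω:ℝ) + T := hden (V ω)
        have hc : (0:ℝ) ≤ (1-β)/β := div_nonneg (by linarith) hβ0.le
        exact (div_le_div_iff_of_pos_right hd).2 (mul_le_mul_of_nonneg_left hω hc)
end

section
/- Let Z = (Z₁, Z₂) have the bivariate normal distribution N(μ, I₂) truncated to {z : z₁ ∈ A} for a measurable set A ⊆ ℝ of positive Gaussian measure. Let η = (η₁, η₂) with η₁ > 0, η⊥ = (η₂, -η₁), D = η·Z, M = η⊥·Z. Then conditional on M = m, D has the distribution N(η·μ, ‖η‖²) truncated to the set {d : (η₁ d + η₂ m)/‖η‖² ∈ A}. -/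
open MeasureTheory ProbabilityTheory

/-- Normalized truncation (conditioning) of a measure on `ℝ` to a set. -/
noncomputable def truncTo (ν : Measure ℝ) (S : Set ℝ) : Measure ℝ :=
  (ν S)⁻¹ • ν.restrict S

/-- Normalized truncation of a measure on `ℝ × ℝ` to a set. -/
noncomputable def truncTo2 (ν : Measure (ℝ × ℝ)) (S : Set (ℝ × ℝ)) : Measure (ℝ × ℝ) :=
  (ν S)⁻¹ • ν.restrict S

open Real Set ENNReal NNReal

namespace SelAux

variable (η₁ η₂ : ℝ)

/-- The linear map `T`. -/
noncomputable def Tlin : (ℝ × ℝ) →ₗ[ℝ] (ℝ × ℝ) where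
  toFun z := (η₂ * z.1 - η₁ * z.2, η₁ * z.1 + η₂ * z.2)
  map_add' x y := by simp [Prod.ext_iff]; constructor <;> ring
  map_smul' c x := by simp [Prod.ext_iff, smul_eq_mul]; constructor <;> ring

lemma det_Tlin : LinearMap.det (Tlin η₁ η₂) = η₁ ^ 2 + η₂ ^ 2 := by
  rw [← LinearMap.det_toMatrix (Module.Basis.finTwoProd ℝ), Matrix.det_fin_two]
  simp [LinearMap.toMatrix_apply, Tlin, Module.Basis.finTwoProd_zero, Module.Basis.finTwoProd_one,
    Module.Basis.coe_finTwoProd_repr]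
  ring

/-- `T` as a measurable equiv. -/
noncomputable def Tequiv (h : η₁ ^ 2 + η₂ ^ 2 ≠ 0) : (ℝ × ℝ) ≃ᵐ (ℝ × ℝ) where
  toFun z := (η₂ * z.1 - η₁ * z.2, η₁ * z.1 + η₂ * z.2)
  invFun p := ((η₂ * p.1 + η₁ * p.2) / (η₁ ^ 2 + η₂ ^ 2),
    (η₂ * p.2 - η₁ * p.1) / (η₁ ^ 2 + η₂ ^ 2))
  left_inv z := by field_simp [Prod.ext_iff]; refine Prod.ext ?_ ?_ <;> field_simp <;> ring
  right_inv p := by field_simp [Prod.ext_iff]; refine Prod.ext ?_ ?_ <;> field_simp <;> ring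
  measurable_toFun := by
    show Measurable fun z : ℝ × ℝ => ((η₂ * z.1 - η₁ * z.2, η₁ * z.1 + η₂ * z.2) : ℝ × ℝ)
    fun_prop
  measurable_invFun := by
    show Measurable fun p : ℝ × ℝ => (((η₂ * p.1 + η₁ * p.2) / (η₁ ^ 2 + η₂ ^ 2),
      (η₂ * p.2 - η₁ * p.1) / (η₁ ^ 2 + η₂ ^ 2)) : ℝ × ℝ)
    fun_prop


lemma volume_map_Tequiv (h : η₁ ^ 2 + η₂ ^ 2 ≠ 0) :
    (volume : Measure (ℝ × ℝ)).map (Tequiv η₁ η₂ h)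
      = ENNReal.ofReal ((η₁ ^ 2 + η₂ ^ 2)⁻¹) • (volume : Measure (ℝ × ℝ)) := by
  have hdet : LinearMap.det (Tlin η₁ η₂) ≠ 0 := by rw [det_Tlin]; exact h
  have := Measure.map_linearMap_addHaar_eq_smul_addHaar
    (volume : Measure (ℝ × ℝ)) hdet
  have hco : ⇑(Tlin η₁ η₂) = ⇑(Tequiv η₁ η₂ h) := rfl
  rw [hco, det_Tlin] at this
  rw [this]
  congr 1
  rw [abs_of_nonneg (by positivity)]

lemma map_withDensity_equiv {α β : Type*} [MeasurableSpace α] [MeasurableSpace β]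
    (e : α ≃ᵐ β) (μ : Measure α) {f : α → ℝ≥0∞} (hf : Measurable f) :
    (μ.withDensity f).map e = (μ.map e).withDensity (f ∘ e.symm) := by
  ext E hE
  rw [MeasurableEquiv.map_apply, withDensity_apply _ (e.measurable hE),
    withDensity_apply _ hE, Measure.restrict_map e.measurable hE,
    lintegral_map (hf.comp e.symm.measurable) e.measurable]
  refine lintegral_congr fun x => ?_
  simp

lemma prod_withDensity {f g : ℝ → ℝ≥0∞} (hf : Measurable f) (hg : Measurable g) :
    (volume.withDensity f).prod (volume.withDensity g)
      = (volume : Measure (ℝ × ℝ)).withDensity (fun p => f p.1 * g p.2) := by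
  ext E hE
  rw [Measure.prod_apply hE, withDensity_apply _ hE]
  rw [lintegral_withDensity_eq_lintegral_mul _ hf
    (measurable_measure_prodMk_left hE)]
  have : ∀ x : ℝ, (volume.withDensity g) (Prod.mk x ⁻¹' E)
      = ∫⁻ y, (Prod.mk x ⁻¹' E).indicator g y := by
    intro x
    rw [withDensity_apply _ (measurable_prodMk_left hE),
      lintegral_indicator (measurable_prodMk_left hE) g]
  simp_rw [this]
  have hmeas : Measurable (E.indicator fun p : ℝ × ℝ => f p.1 * g p.2) :=
    ((hf.comp measurable_fst).mul (hg.comp measurable_snd)).indicator hE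
  rw [← lintegral_indicator hE, Measure.volume_eq_prod,
    lintegral_prod _ hmeas.aemeasurable]
  refine lintegral_congr fun x => ?_
  have h2 : ∀ y, E.indicator (fun p : ℝ × ℝ => f p.1 * g p.2) (x, y)
      = f x * (Prod.mk x ⁻¹' E).indicator g y := by
    intro y
    by_cases hxy : (x, y) ∈ E
    · simp [Set.indicator_of_mem, hxy, Set.mem_preimage.mpr hxy]
    · simp [Set.indicator_of_notMem, hxy]
  simp_rw [h2]
  rw [lintegral_const_mul _ (hg.indicator (measurable_prodMk_left hE))]
  rfl


lemma real_pdf_identity (h : 0 < η₁ ^ 2 + η₂ ^ 2) (μ₁ μ₂ p₁ p₂ : ℝ) :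
    (η₁ ^ 2 + η₂ ^ 2)⁻¹ * (gaussianPDFReal μ₁ 1 ((η₂ * p₁ + η₁ * p₂) / (η₁ ^ 2 + η₂ ^ 2))
        * gaussianPDFReal μ₂ 1 ((η₂ * p₂ - η₁ * p₁) / (η₁ ^ 2 + η₂ ^ 2)))
      = gaussianPDFReal (η₂ * μ₁ - η₁ * μ₂) (η₁ ^ 2 + η₂ ^ 2).toNNReal p₁
        * gaussianPDFReal (η₁ * μ₁ + η₂ * μ₂) (η₁ ^ 2 + η₂ ^ 2).toNNReal p₂ := by
  have hs0 : (η₁ ^ 2 + η₂ ^ 2) ≠ 0 := h.ne'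
  have hc : (((η₁ ^ 2 + η₂ ^ 2).toNNReal : ℝ≥0) : ℝ) = η₁ ^ 2 + η₂ ^ 2 :=
    Real.coe_toNNReal _ h.le
  set s := η₁ ^ 2 + η₂ ^ 2 with hsdef
  unfold gaussianPDFReal
  rw [hc]
  push_cast
  set b := √(2 * π * 1) with hbdef
  set c := √(2 * π * s) with hcdef
  calc s⁻¹ * ((b⁻¹ * rexp (-((η₂ * p₁ + η₁ * p₂) / s - μ₁) ^ 2 / (2 * 1)))
          * (b⁻¹ * rexp (-((η₂ * p₂ - η₁ * p₁) / s - μ₂) ^ 2 / (2 * 1))))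
      = (s⁻¹ * (b⁻¹ * b⁻¹)) * rexp (-((η₂ * p₁ + η₁ * p₂) / s - μ₁) ^ 2 / (2 * 1)
          + -((η₂ * p₂ - η₁ * p₁) / s - μ₂) ^ 2 / (2 * 1)) := by
        rw [Real.exp_add]; ring
    _ = (c⁻¹ * c⁻¹) * rexp (-(p₁ - (η₂ * μ₁ - η₁ * μ₂)) ^ 2 / (2 * s)
          + -(p₂ - (η₁ * μ₁ + η₂ * μ₂)) ^ 2 / (2 * s)) := by
        congr 1
        · rw [← mul_inv, ← mul_inv, ← mul_inv, hbdef, hcdef,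
            Real.mul_self_sqrt (by positivity), Real.mul_self_sqrt (by positivity)]
          congr 1
          ring
        · congr 1
          field_simp
          ring
    _ = (c⁻¹ * rexp (-(p₁ - (η₂ * μ₁ - η₁ * μ₂)) ^ 2 / (2 * s)))
          * (c⁻¹ * rexp (-(p₂ - (η₁ * μ₁ + η₂ * μ₂)) ^ 2 / (2 * s))) := by
        rw [Real.exp_add]; ring

lemma gaussian_prod_map (h : 0 < η₁ ^ 2 + η₂ ^ 2) (μ₁ μ₂ : ℝ) :
    ((gaussianReal μ₁ 1).prod (gaussianReal μ₂ 1)).map (Tequiv η₁ η₂ h.ne')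
      = (gaussianReal (η₂ * μ₁ - η₁ * μ₂) (η₁ ^ 2 + η₂ ^ 2).toNNReal).prod
          (gaussianReal (η₁ * μ₁ + η₂ * μ₂) (η₁ ^ 2 + η₂ ^ 2).toNNReal) := by
  have hsnn : (η₁ ^ 2 + η₂ ^ 2).toNNReal ≠ 0 := by
    simp only [ne_eq, Real.toNNReal_eq_zero, not_le]
    exact h
  rw [gaussianReal_of_var_ne_zero _ (one_ne_zero), gaussianReal_of_var_ne_zero μ₂ (one_ne_zero),
    gaussianReal_of_var_ne_zero _ hsnn, gaussianReal_of_var_ne_zero _ hsnn,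
    prod_withDensity (measurable_gaussianPDF _ _) (measurable_gaussianPDF _ _),
    prod_withDensity (measurable_gaussianPDF _ _) (measurable_gaussianPDF _ _),
    map_withDensity_equiv _ _
      (show Measurable fun p : ℝ × ℝ => gaussianPDF μ₁ 1 p.1 * gaussianPDF μ₂ 1 p.2 from
        ((measurable_gaussianPDF μ₁ 1).comp measurable_fst).mul
          ((measurable_gaussianPDF μ₂ 1).comp measurable_snd)),
    volume_map_Tequiv η₁ η₂ h.ne', withDensity_smul_measure]
  rw [← withDensity_smul' _ _ (by simp)]
  congr 1
  funext p
  show ENNReal.ofReal ((η₁ ^ 2 + η₂ ^ 2)⁻¹)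
      * (gaussianPDF μ₁ 1 ((Tequiv η₁ η₂ h.ne').symm p).1
        * gaussianPDF μ₂ 1 ((Tequiv η₁ η₂ h.ne').symm p).2)
    = gaussianPDF (η₂ * μ₁ - η₁ * μ₂) (η₁ ^ 2 + η₂ ^ 2).toNNReal p.1
      * gaussianPDF (η₁ * μ₁ + η₂ * μ₂) (η₁ ^ 2 + η₂ ^ 2).toNNReal p.2
  have hsymm : (Tequiv η₁ η₂ h.ne').symm p
      = ((η₂ * p.1 + η₁ * p.2) / (η₁ ^ 2 + η₂ ^ 2),
        (η₂ * p.2 - η₁ * p.1) / (η₁ ^ 2 + η₂ ^ 2)) := rfl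
  rw [hsymm]
  unfold gaussianPDF
  rw [← ENNReal.ofReal_mul (gaussianPDFReal_nonneg _ _ _),
    ← ENNReal.ofReal_mul (by positivity),
    ← ENNReal.ofReal_mul (gaussianPDFReal_nonneg _ _ _)]
  exact congrArg ENNReal.ofReal (real_pdf_identity η₁ η₂ h μ₁ μ₂ p.1 p.2)


/-- The candidate conditional kernel. -/
noncomputable def κker (η₁ η₂ μ₁ μ₂ : ℝ) (A : Set ℝ) (hA : MeasurableSet A) : Kernel ℝ ℝ where
  toFun m := truncTo (gaussianReal (η₁ * μ₁ + η₂ * μ₂) ((η₁ ^ 2 + η₂ ^ 2).toNNReal))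
    {d | (η₁ * d + η₂ * m) / (η₁ ^ 2 + η₂ ^ 2) ∈ A}
  measurable' := by
    have hS : MeasurableSet {p : ℝ × ℝ | (η₁ * p.2 + η₂ * p.1) / (η₁ ^ 2 + η₂ ^ 2) ∈ A} :=
      ((measurable_const.mul measurable_snd).add
        (measurable_const.mul measurable_fst)).div_const _ hA
    apply Measure.measurable_of_measurable_coe
    intro E hE
    set ν := gaussianReal (η₁ * μ₁ + η₂ * μ₂) ((η₁ ^ 2 + η₂ ^ 2).toNNReal) with hν
    have key : ∀ m : ℝ,
        truncTo ν {d | (η₁ * d + η₂ * m) / (η₁ ^ 2 + η₂ ^ 2) ∈ A} E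
          = (ν (Prod.mk m ⁻¹' {p : ℝ × ℝ | (η₁ * p.2 + η₂ * p.1) / (η₁ ^ 2 + η₂ ^ 2) ∈ A}))⁻¹
            * ν (Prod.mk m ⁻¹' ((Set.univ ×ˢ E) ∩
                {p : ℝ × ℝ | (η₁ * p.2 + η₂ * p.1) / (η₁ ^ 2 + η₂ ^ 2) ∈ A})) := by
      intro m
      have h1 : Prod.mk m ⁻¹' {p : ℝ × ℝ | (η₁ * p.2 + η₂ * p.1) / (η₁ ^ 2 + η₂ ^ 2) ∈ A}
          = {d | (η₁ * d + η₂ * m) / (η₁ ^ 2 + η₂ ^ 2) ∈ A} := rfl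
      have h2 : Prod.mk m ⁻¹' ((Set.univ ×ˢ E) ∩
            {p : ℝ × ℝ | (η₁ * p.2 + η₂ * p.1) / (η₁ ^ 2 + η₂ ^ 2) ∈ A})
          = E ∩ {d | (η₁ * d + η₂ * m) / (η₁ ^ 2 + η₂ ^ 2) ∈ A} := by
        ext d; simp [Set.mem_preimage]
      rw [h1, h2]
      simp [truncTo, Measure.restrict_apply hE]
    simp_rw [key]
    exact ((measurable_measure_prodMk_left hS).inv).mul
      (measurable_measure_prodMk_left ((MeasurableSet.univ.prod hE).inter hS))


lemma sect_pos {η₁ η₂ : ℝ} (hη₁ : 0 < η₁) (c : ℝ) {v : ℝ≥0} (hv : v ≠ 0) {A : Set ℝ}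
    (hvol : 0 < (volume : Measure ℝ) A) (m : ℝ) :
    0 < gaussianReal c v {d | (η₁ * d + η₂ * m) / (η₁ ^ 2 + η₂ ^ 2) ∈ A} := by
  have hs : (0:ℝ) < η₁ ^ 2 + η₂ ^ 2 := by nlinarith [sq_nonneg η₂]
  rcases eq_or_lt_of_le (show 0 ≤ gaussianReal c v
    {d | (η₁ * d + η₂ * m) / (η₁ ^ 2 + η₂ ^ 2) ∈ A} from zero_le) with h0 | h
  swap
  · exact h
  exfalso
  have hvol0 : (volume : Measure ℝ) {d | (η₁ * d + η₂ * m) / (η₁ ^ 2 + η₂ ^ 2) ∈ A} = 0 :=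
    gaussianReal_absolutelyContinuous' c hv h0.symm
  have hset : {d : ℝ | (η₁ * d + η₂ * m) / (η₁ ^ 2 + η₂ ^ 2) ∈ A}
      = (fun d => (η₁ / (η₁ ^ 2 + η₂ ^ 2)) * d) ⁻¹'
          ((fun x => (η₂ * m) / (η₁ ^ 2 + η₂ ^ 2) + x) ⁻¹' A) := by
    ext d
    simp only [Set.mem_setOf_eq, Set.mem_preimage]
    rw [show η₂ * m / (η₁ ^ 2 + η₂ ^ 2) + η₁ / (η₁ ^ 2 + η₂ ^ 2) * d
      = (η₁ * d + η₂ * m) / (η₁ ^ 2 + η₂ ^ 2) by ring]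
  rw [hset, Real.volume_preimage_mul_left (div_pos hη₁ hs).ne',
    measure_preimage_add volume _ A] at hvol0
  rcases mul_eq_zero.1 hvol0 with h1 | h1
  · exact absurd h1 (by
      simp only [ne_eq, ENNReal.ofReal_eq_zero, not_le, abs_pos]
      exact inv_ne_zero (div_pos hη₁ hs).ne')
  · exact absurd h1 hvol.ne'

end SelAux

/-- Let `Z = (Z₁, Z₂) ~ N(μ, I₂)` truncated to `{z : z₁ ∈ A}` for measurable `A` of
positive Gaussian measure, and let `η = (η₁, η₂)` with `η₁ > 0`, `η⊥ = (η₂, -η₁)`,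
`D = η·Z`, `M = η⊥·Z`.  Then, conditional on `M = m`, `D` has the `N(η·μ, ‖η‖²)`
distribution truncated to `{d : (η₁ d + η₂ m)/‖η‖² ∈ A}`.  The conditional law is
expressed via the disintegration kernel of the joint law of `(M, D)`. -/
theorem selective_conditional_law (μ₁ μ₂ η₁ η₂ : ℝ) (hη₁ : 0 < η₁)
    (A : Set ℝ) (hA : MeasurableSet A) (hApos : 0 < gaussianReal μ₁ 1 A)
    (μZ : Measure (ℝ × ℝ))
    (hμZ : μZ = truncTo2 ((gaussianReal μ₁ 1).prod (gaussianReal μ₂ 1)) {z | z.1 ∈ A})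
    (ρ : Measure (ℝ × ℝ))
    (hρ : ρ = μZ.map (fun z => (η₂ * z.1 - η₁ * z.2, η₁ * z.1 + η₂ * z.2)))
    [IsFiniteMeasure ρ] :
    ∀ᵐ m ∂ρ.fst,
      ρ.condKernel m
        = truncTo (gaussianReal (η₁ * μ₁ + η₂ * μ₂) ((η₁ ^ 2 + η₂ ^ 2).toNNReal))
            {d | (η₁ * d + η₂ * m) / (η₁ ^ 2 + η₂ ^ 2) ∈ A} := by
  have hs : (0:ℝ) < η₁ ^ 2 + η₂ ^ 2 := by nlinarith [sq_nonneg η₂]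
  set ν₁ := gaussianReal (η₂ * μ₁ - η₁ * μ₂) ((η₁ ^ 2 + η₂ ^ 2).toNNReal) with hν₁
  set ν₂ := gaussianReal (η₁ * μ₁ + η₂ * μ₂) ((η₁ ^ 2 + η₂ ^ 2).toNNReal) with hν₂
  set S : Set (ℝ × ℝ) := {p : ℝ × ℝ | (η₁ * p.2 + η₂ * p.1) / (η₁ ^ 2 + η₂ ^ 2) ∈ A} with hSdef
  have hS : MeasurableSet S :=
    ((measurable_const.mul measurable_snd).add
      (measurable_const.mul measurable_fst)).div_const _ hA
  set c := gaussianReal μ₁ 1 A with hcdef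
  have hc0 : c ≠ 0 := hApos.ne'
  set e := SelAux.Tequiv η₁ η₂ hs.ne' with hedef
  -- the truncation set upstairs is a rectangle
  have hPA : ((gaussianReal μ₁ 1).prod (gaussianReal μ₂ 1)) {z : ℝ × ℝ | z.1 ∈ A} = c := by
    have : {z : ℝ × ℝ | z.1 ∈ A} = A ×ˢ Set.univ := by ext z; simp
    rw [this, Measure.prod_prod, measure_univ, mul_one]
  -- the preimage of S under e
  have hpre : ⇑e ⁻¹' S = {z : ℝ × ℝ | z.1 ∈ A} := by
    ext z
    have he : e z = (η₂ * z.1 - η₁ * z.2, η₁ * z.1 + η₂ * z.2) := rfl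
    simp only [Set.mem_preimage, hSdef, Set.mem_setOf_eq, he]
    rw [show (η₁ * (η₁ * z.1 + η₂ * z.2) + η₂ * (η₂ * z.1 - η₁ * z.2)) / (η₁ ^ 2 + η₂ ^ 2)
      = z.1 by field_simp; ring]
  -- Step 1: identify ρ
  have hρeq : ρ = c⁻¹ • ((ν₁.prod ν₂).restrict S) := by
    have hecoe : (fun z : ℝ × ℝ => (η₂ * z.1 - η₁ * z.2, η₁ * z.1 + η₂ * z.2)) = ⇑e := rfl
    rw [hρ, hμZ, truncTo2, hPA, hecoe, Measure.map_smul, ← hpre,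
      ← Measure.restrict_map e.measurable hS, SelAux.gaussian_prod_map η₁ η₂ hs]
  -- section measures
  set b : ℝ → ℝ≥0∞ := fun m => ν₂ (Prod.mk m ⁻¹' S) with hbdef
  have hb : Measurable b := measurable_measure_prodMk_left hS
  have hbpos : ∀ m, 0 < b m := fun m =>
    SelAux.sect_pos hη₁ _ (by simp only [ne_eq, Real.toNNReal_eq_zero, not_le]; exact hs)
      (pos_iff_ne_zero.mpr fun hv =>
        hApos.ne' ((gaussianReal_absolutelyContinuous μ₁ one_ne_zero) hv)) m
  -- Step 2: the first marginal
  have hfst : ρ.fst = c⁻¹ • ν₁.withDensity b := by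
    ext E hE
    rw [Measure.fst_apply hE, hρeq]
    simp only [Measure.smul_apply, smul_eq_mul]
    rw [Measure.restrict_apply (measurable_fst hE),
      Measure.prod_apply ((measurable_fst hE).inter hS), withDensity_apply _ hE]
    congr 1
    rw [← lintegral_indicator hE]
    refine lintegral_congr fun m => ?_
    by_cases hm : m ∈ E
    · rw [Set.indicator_of_mem hm]
      congr 1
      ext d
      simp [hm]
    · rw [Set.indicator_of_notMem hm]
      convert measure_empty
      · ext d; simp [hm]
      · infer_instance
  -- the kernel
  set κ := SelAux.κker η₁ η₂ μ₁ μ₂ A hA with hκdef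
  have hκ_apply : ∀ m {F : Set ℝ}, MeasurableSet F →
      κ m F = (b m)⁻¹ * ν₂ (F ∩ Prod.mk m ⁻¹' S) := by
    intro m F hF
    have : κ m = truncTo ν₂ {d | (η₁ * d + η₂ * m) / (η₁ ^ 2 + η₂ ^ 2) ∈ A} := rfl
    rw [this, truncTo]
    simp only [Measure.smul_apply, smul_eq_mul, Measure.restrict_apply hF]
    rfl
  haveI : IsMarkovKernel κ := by
    constructor
    intro m
    constructor
    rw [hκ_apply m MeasurableSet.univ, Set.univ_inter]
    exact ENNReal.inv_mul_cancel (hbpos m).ne' (measure_ne_top _ _)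
  -- Step 3: the disintegration identity
  have hcomp : ρ = ρ.fst ⊗ₘ κ := by
    ext E hE
    rw [Measure.compProd_apply hE, hfst, lintegral_smul_measure,
      lintegral_withDensity_eq_lintegral_mul _ hb
        (Kernel.measurable_kernel_prodMk_left hE)]
    have hpt : ∀ m, (b * fun a => κ a (Prod.mk a ⁻¹' E)) m = ν₂ (Prod.mk m ⁻¹' (E ∩ S)) := by
      intro m
      simp only [Pi.mul_apply]
      rw [hκ_apply m (measurable_prodMk_left hE), ← mul_assoc,
        ENNReal.mul_inv_cancel (hbpos m).ne' (measure_ne_top _ _), one_mul,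
        Set.preimage_inter]
    simp_rw [hpt]
    rw [← Measure.prod_apply (hE.inter hS), hρeq]
    simp only [Measure.smul_apply, smul_eq_mul, Measure.restrict_apply hE]
  have huniq := eq_condKernel_of_measure_eq_compProd κ hcomp
  filter_upwards [huniq] with m hm
  rw [← hm]
  rfl
end

section
/- The selective z-test has level 0.05: if Z = (Z₁, Z₂) ~ N(μ, I₂) truncated to {z₁ ∈ A}, η·μ = δ, and the test rejects when D = η·Z falls below the 0.025-quantile or above the 0.975-quantile of the N(δ, ‖η‖²) distribution truncated to (‖η‖²A - η₂M)/η₁ (with M = η⊥·Z), then the probability of rejection is exactly 0.05. -/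
open MeasureTheory ProbabilityTheory

/-- The `p`-quantile of a distribution `ν` on `ℝ`. -/
noncomputable def quantile (ν : Measure ℝ) (p : ℝ) : ℝ :=
  sInf {x : ℝ | p ≤ (ν (Set.Iic x)).toReal}

namespace SelectiveAux

open Filter Topology Set Real
open scoped NNReal ENNReal

/-! ### Quantile lemmas -/

variable (ν : Measure ℝ) [IsProbabilityMeasure ν]

lemma quantile_set_eq (p : ℝ) :
    {x : ℝ | p ≤ (ν (Set.Iic x)).toReal} = {x | p ≤ cdf ν x} := by
  ext x; simp [cdf_eq_real, measureReal_def]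

lemma quantile_set_nonempty {p : ℝ} (hp1 : p < 1) :
    {x : ℝ | p ≤ (ν (Set.Iic x)).toReal}.Nonempty := by
  rw [quantile_set_eq]
  exact ((tendsto_cdf_atTop ν).eventually (eventually_ge_nhds hp1)).exists

lemma quantile_set_bddBelow {p : ℝ} (hp0 : 0 < p) :
    BddBelow {x : ℝ | p ≤ (ν (Set.Iic x)).toReal} := by
  rw [quantile_set_eq]
  obtain ⟨a, ha⟩ := eventually_atBot.mp ((tendsto_cdf_atBot ν).eventually (eventually_lt_nhds hp0))
  exact ⟨a, fun y hy => le_of_not_gt fun h => absurd hy (not_le.mpr (ha y h.le))⟩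

lemma cdf_quantile [NullSingletonClass ν] {p : ℝ} (hp0 : 0 < p) (hp1 : p < 1) :
    cdf ν (quantile ν p) = p := by
  have hne := quantile_set_nonempty ν hp1
  have hbdd := quantile_set_bddBelow ν hp0
  set q := quantile ν p with hq
  have hub : p ≤ cdf ν q := by
    have h1 : ∀ x, q < x → p ≤ cdf ν x := by
      intro x hx
      obtain ⟨y, hy, hyx⟩ := (csInf_lt_iff hbdd hne).mp hx
      rw [quantile_set_eq] at hy
      exact hy.trans (monotone_cdf ν hyx.le)
    have h2 : Tendsto (cdf ν) (𝓝[>] q) (𝓝 (cdf ν q)) :=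
      ((cdf ν).right_continuous q).mono_left (nhdsWithin_mono q Ioi_subset_Ici_self)
    exact ge_of_tendsto h2 (eventually_nhdsWithin_of_forall fun x hx => h1 x hx)
  have hlb : cdf ν q ≤ p := by
    have hL : Function.leftLim (cdf ν) q ≤ p := by
      refine le_of_tendsto ((cdf ν).mono.tendsto_leftLim q)
        (eventually_nhdsWithin_of_forall fun x (hx : x < q) => ?_)
      by_contra hc
      push_neg at hc
      have : q ≤ x := csInf_le hbdd (by rw [quantile_set_eq] at *; exact Set.mem_setOf.mpr hc.le)
      exact absurd hx (not_lt.mpr this)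
    have h0 : ν {q} = 0 := measure_singleton q
    rw [← measure_cdf ν] at h0
    rw [StieltjesFunction.measure_singleton, ENNReal.ofReal_eq_zero, sub_nonpos] at h0
    exact h0.trans hL
  linarith

lemma measure_Iic_quantile [NullSingletonClass ν] {p : ℝ} (hp0 : 0 < p) (hp1 : p < 1) :
    ν (Set.Iic (quantile ν p)) = ENNReal.ofReal p := by
  rw [← ofReal_cdf, cdf_quantile ν hp0 hp1]

lemma measure_Iio_quantile [NullSingletonClass ν] {p : ℝ} (hp0 : 0 < p) (hp1 : p < 1) :
    ν (Set.Iio (quantile ν p)) = ENNReal.ofReal p := by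
  rw [measure_congr (Iio_ae_eq_Iic (μ := ν) (a := quantile ν p)), measure_Iic_quantile ν hp0 hp1]

lemma quantile_mono {p₁ p₂ : ℝ} (hp0 : 0 < p₁) (hle : p₁ ≤ p₂) (hp1 : p₂ < 1) :
    quantile ν p₁ ≤ quantile ν p₂ := by
  refine csInf_le_csInf (quantile_set_bddBelow ν hp0) (quantile_set_nonempty ν hp1) ?_
  intro x hx
  exact Set.mem_setOf.mpr (hle.trans hx)

/-! ### Truncation lemmas -/

lemma truncTo_isProb (μ : Measure ℝ) [IsFiniteMeasure μ] {S : Set ℝ} (h0 : μ S ≠ 0) :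
    IsProbabilityMeasure ((μ S)⁻¹ • μ.restrict S) :=
  ⟨by rw [Measure.smul_apply, Measure.restrict_apply_univ, smul_eq_mul,
    ENNReal.inv_mul_cancel h0 (measure_ne_top μ S)]⟩

lemma truncTo_noAtoms (μ : Measure ℝ) [NullSingletonClass μ] {S : Set ℝ} (c : ℝ≥0∞) :
    NullSingletonClass (c • μ.restrict S) := by
  constructor
  intro x
  rw [Measure.smul_apply, Measure.restrict_apply (measurableSet_singleton x)]
  have : μ ({x} ∩ S) = 0 := le_antisymm ((measure_mono Set.inter_subset_left).trans
    (measure_singleton x).le) zero_le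
  rw [this, smul_eq_mul, mul_zero]

/-! ### Measurability of the quantile of the truncated conditional -/

lemma measurable_quantile_section (κ : Measure ℝ) [IsFiniteMeasure κ]
    {S : Set (ℝ × ℝ)} (hS : MeasurableSet S) {p : ℝ} (hp0 : 0 < p) (hp1 : p < 1) :
    Measurable (fun m => quantile ((κ (Prod.mk m ⁻¹' S))⁻¹ • κ.restrict (Prod.mk m ⁻¹' S)) p) := by
  set νm : ℝ → Measure ℝ :=
    fun m => (κ (Prod.mk m ⁻¹' S))⁻¹ • κ.restrict (Prod.mk m ⁻¹' S) with hνm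
  have hsec : ∀ m (x : ℝ), νm m (Set.Iic x)
      = (κ (Prod.mk m ⁻¹' S))⁻¹ * κ (Prod.mk m ⁻¹' ((Set.univ ×ˢ Set.Iic x) ∩ S)) := by
    intro m x
    rw [hνm, Measure.smul_apply, Measure.restrict_apply measurableSet_Iic, smul_eq_mul]
    have hseteq : Set.Iic x ∩ Prod.mk m ⁻¹' S = Prod.mk m ⁻¹' ((Set.univ ×ˢ Set.Iic x) ∩ S) := by
      ext d; simp [Set.mem_prod, and_comm]
    rw [hseteq]
  have hmeas0 : Measurable fun m => κ (Prod.mk m ⁻¹' S) :=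
    measurable_measure_prodMk_left hS
  have hmeasW : ∀ x : ℝ, Measurable fun m => (νm m (Set.Iic x)).toReal := by
    intro x
    simp only [hsec]
    exact (hmeas0.inv.mul (measurable_measure_prodMk_left
      ((MeasurableSet.univ.prod measurableSet_Iic).inter hS))).ennreal_toReal
  apply measurable_of_Iio
  intro t
  have hchar : (fun m => quantile (νm m) p) ⁻¹' Set.Iio t
      = ({m | κ (Prod.mk m ⁻¹' S) = 0} ∩ {m : ℝ | (0:ℝ) < t}) ∪
        ({m | κ (Prod.mk m ⁻¹' S) = 0}ᶜ ∩
          ⋃ (r : ℚ), ({m : ℝ | (r:ℝ) < t} ∩ {m | p ≤ (νm m (Set.Iic (r:ℝ))).toReal})) := by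
    ext m
    by_cases h0 : κ (Prod.mk m ⁻¹' S) = 0
    · have hW : ∀ x : ℝ, (νm m (Set.Iic x)).toReal = 0 := by
        intro x
        rw [hsec]
        have : κ (Prod.mk m ⁻¹' ((Set.univ ×ˢ Set.Iic x) ∩ S)) = 0 :=
          le_antisymm ((measure_mono (Set.preimage_mono Set.inter_subset_right)).trans h0.le)
            zero_le
        rw [this, mul_zero]; simp
      have hQ : quantile (νm m) p = 0 := by
        rw [quantile]
        convert Real.sInf_empty using 2
        ext x
        simp only [Set.mem_setOf_eq, Set.mem_empty_iff_false, iff_false, not_le, hW]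
        exact hp0
      simp only [Set.mem_preimage, Set.mem_Iio, hQ, Set.mem_union, Set.mem_inter_iff,
        Set.mem_setOf_eq, Set.mem_compl_iff, Set.mem_iUnion, hW]
      constructor
      · intro ht; exact Or.inl ⟨h0, ht⟩
      · rintro (⟨_, ht⟩ | ⟨hc, _⟩)
        · exact ht
        · exact absurd h0 hc
    · haveI : IsProbabilityMeasure (νm m) := truncTo_isProb κ h0
      have hne := quantile_set_nonempty (νm m) hp1
      have hbdd := quantile_set_bddBelow (νm m) hp0
      have hmono : Monotone fun x => (νm m (Set.Iic x)).toReal := fun a b hab =>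
        ENNReal.toReal_mono (measure_ne_top _ _) (measure_mono (Set.Iic_subset_Iic.mpr hab))
      simp only [Set.mem_preimage, Set.mem_Iio, Set.mem_union, Set.mem_inter_iff,
        Set.mem_setOf_eq, Set.mem_compl_iff, Set.mem_iUnion]
      rw [quantile, csInf_lt_iff hbdd hne]
      constructor
      · rintro ⟨x, hx, hxt⟩
        obtain ⟨r, hxr, hrt⟩ := exists_rat_btwn hxt
        exact Or.inr ⟨h0, r, hrt, hx.trans (hmono hxr.le)⟩
      · rintro (⟨hc, _⟩ | ⟨_, r, hrt, hr⟩)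
        · exact absurd hc h0
        · exact ⟨(r:ℝ), hr, hrt⟩
  rw [hchar]
  refine MeasurableSet.union
    (MeasurableSet.inter (hmeas0 (measurableSet_singleton 0)) ?_)
    (MeasurableSet.inter ((hmeas0 (measurableSet_singleton 0)).compl)
      (MeasurableSet.iUnion fun r => MeasurableSet.inter ?_ ?_))
  · by_cases ht : (0:ℝ) < t
    · exact MeasurableSet.univ.congr (by ext m; simp [ht])
    · have : {m : ℝ | (0:ℝ) < t} = ∅ := by ext m; simp [ht]
      rw [this]; exact MeasurableSet.empty
  · by_cases ht : (r:ℝ) < t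
    · have : {m : ℝ | (r:ℝ) < t} = Set.univ := by ext m; simp [ht]
      rw [this]; exact MeasurableSet.univ
    · have : {m : ℝ | (r:ℝ) < t} = ∅ := by ext m; simp [ht]
      rw [this]; exact MeasurableSet.empty
  · exact measurableSet_le measurable_const (hmeasW (r:ℝ))

/-! ### The rotation equivalence and the Gaussian pushforward -/

/-- The linear measurable equivalence `z ↦ (η₂ z₁ - η₁ z₂, η₁ z₁ + η₂ z₂)`. -/
noncomputable def rotEquiv (η₁ η₂ : ℝ) (hs : η₁ ^ 2 + η₂ ^ 2 ≠ 0) : (ℝ × ℝ) ≃ᵐ (ℝ × ℝ) where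
  toFun z := (η₂ * z.1 - η₁ * z.2, η₁ * z.1 + η₂ * z.2)
  invFun w := ((η₁ * w.2 + η₂ * w.1) / (η₁ ^ 2 + η₂ ^ 2),
               (η₂ * w.2 - η₁ * w.1) / (η₁ ^ 2 + η₂ ^ 2))
  left_inv z := by
    ext <;> simp only <;> field_simp <;> ring
  right_inv w := by
    ext <;> simp only <;> field_simp <;> ring
  measurable_toFun := by
    apply Measurable.prod <;> fun_prop
  measurable_invFun := by
    apply Measurable.prod <;> fun_prop

lemma volume_map_rotEquiv (η₁ η₂ : ℝ) (hs : 0 < η₁ ^ 2 + η₂ ^ 2) :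
    (volume : Measure (ℝ × ℝ)).map (rotEquiv η₁ η₂ hs.ne')
      = ENNReal.ofReal (η₁ ^ 2 + η₂ ^ 2)⁻¹ • volume := by
  set T : (ℝ × ℝ) →ₗ[ℝ] (ℝ × ℝ) :=
    Matrix.toLin (Module.Basis.finTwoProd ℝ) (Module.Basis.finTwoProd ℝ) !![η₂, -η₁; η₁, η₂] with hT
  have hdet : LinearMap.det T = η₁ ^ 2 + η₂ ^ 2 := by
    rw [hT, LinearMap.det_toLin, Matrix.det_fin_two_of]
    ring
  have hTe : ⇑T = ⇑(rotEquiv η₁ η₂ hs.ne') := by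
    funext z
    rw [hT, Matrix.toLin_finTwoProd_apply]
    show (_, _) = (η₂ * z.1 - η₁ * z.2, η₁ * z.1 + η₂ * z.2)
    rw [Prod.mk.injEq]
    constructor <;> ring
  rw [← hTe, Measure.map_linearMap_addHaar_eq_smul_addHaar volume (by rw [hdet]; exact hs.ne'),
    hdet, abs_of_pos (by positivity)]

lemma pdf_identity (μ₁ μ₂ η₁ η₂ : ℝ) (hs : 0 < η₁ ^ 2 + η₂ ^ 2) (w : ℝ × ℝ) :
    (η₁ ^ 2 + η₂ ^ 2)⁻¹ *
      (gaussianPDFReal μ₁ 1 ((η₁ * w.2 + η₂ * w.1) / (η₁ ^ 2 + η₂ ^ 2)) *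
       gaussianPDFReal μ₂ 1 ((η₂ * w.2 - η₁ * w.1) / (η₁ ^ 2 + η₂ ^ 2)))
    = gaussianPDFReal (η₂ * μ₁ - η₁ * μ₂) ((η₁ ^ 2 + η₂ ^ 2).toNNReal) w.1 *
      gaussianPDFReal (η₁ * μ₁ + η₂ * μ₂) ((η₁ ^ 2 + η₂ ^ 2).toNNReal) w.2 := by
  set s := η₁ ^ 2 + η₂ ^ 2 with hsdef
  have hcoe : ((s.toNNReal : ℝ≥0) : ℝ) = s := Real.coe_toNNReal _ hs.le
  simp only [gaussianPDFReal, hcoe, NNReal.coe_one, mul_one]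
  have h2π : (0:ℝ) < 2 * π := by positivity
  have hsqrt : (√(2 * π))⁻¹ * (√(2 * π))⁻¹ = (2 * π)⁻¹ := by
    rw [← mul_inv, Real.mul_self_sqrt h2π.le]
  have hsqrt' : (√(2 * π * s))⁻¹ * (√(2 * π * s))⁻¹ = (2 * π * s)⁻¹ := by
    rw [← mul_inv, Real.mul_self_sqrt (by positivity)]
  have hexp : (-((η₁ * w.2 + η₂ * w.1) / s - μ₁) ^ 2 / 2) +
      (-((η₂ * w.2 - η₁ * w.1) / s - μ₂) ^ 2 / 2)
      = (-(w.1 - (η₂ * μ₁ - η₁ * μ₂)) ^ 2 / (2 * s)) +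
        (-(w.2 - (η₁ * μ₁ + η₂ * μ₂)) ^ 2 / (2 * s)) := by
    field_simp
    ring
  calc s⁻¹ * ((√(2 * π))⁻¹ * rexp (-((η₁ * w.2 + η₂ * w.1) / s - μ₁) ^ 2 / 2) *
        ((√(2 * π))⁻¹ * rexp (-((η₂ * w.2 - η₁ * w.1) / s - μ₂) ^ 2 / 2)))
      = s⁻¹ * ((√(2 * π))⁻¹ * (√(2 * π))⁻¹) *
          rexp ((-((η₁ * w.2 + η₂ * w.1) / s - μ₁) ^ 2 / 2) +
                (-((η₂ * w.2 - η₁ * w.1) / s - μ₂) ^ 2 / 2)) := by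
        rw [Real.exp_add]; ring
    _ = (√(2 * π * s))⁻¹ * (√(2 * π * s))⁻¹ *
          rexp ((-(w.1 - (η₂ * μ₁ - η₁ * μ₂)) ^ 2 / (2 * s)) +
                (-(w.2 - (η₁ * μ₁ + η₂ * μ₂)) ^ 2 / (2 * s))) := by
        rw [hexp, hsqrt, hsqrt',
          show (2 * π * s)⁻¹ = (2 * π)⁻¹ * s⁻¹ by rw [mul_inv]]
        ring
    _ = _ := by rw [Real.exp_add]; ring

lemma gauss_prod_withDensity (a b : ℝ) (u w : ℝ≥0) (hu : u ≠ 0) (hw : w ≠ 0) :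
    (gaussianReal a u).prod (gaussianReal b w)
      = (volume : Measure (ℝ × ℝ)).withDensity
          (fun z => gaussianPDF a u z.1 * gaussianPDF b w z.2) := by
  refine Measure.prod_eq fun s t hs ht => ?_
  rw [withDensity_apply _ (hs.prod ht)]
  rw [Measure.volume_eq_prod, ← Measure.prod_restrict]
  rw [lintegral_prod_mul ((measurable_gaussianPDF a u).aemeasurable)
    ((measurable_gaussianPDF b w).aemeasurable)]
  rw [gaussianReal_apply _ hu, gaussianReal_apply _ hw,
    ← withDensity_apply _ hs, ← withDensity_apply _ ht]

lemma withDensity_map_equiv {α β : Type*} [MeasurableSpace α] [MeasurableSpace β]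
    (μ : Measure α) (e : α ≃ᵐ β) (f : α → ℝ≥0∞) :
    (μ.withDensity f).map e = (μ.map e).withDensity (fun y => f (e.symm y)) := by
  ext s hs
  rw [Measure.map_apply e.measurable hs, withDensity_apply _ (e.measurable hs),
    withDensity_apply _ hs, Measure.restrict_map e.measurable hs,
    lintegral_map_equiv (fun y => f (e.symm y)) e]
  simp

lemma gaussian_prod_map (μ₁ μ₂ η₁ η₂ : ℝ) (hs : 0 < η₁ ^ 2 + η₂ ^ 2) :
    ((gaussianReal μ₁ 1).prod (gaussianReal μ₂ 1)).map (rotEquiv η₁ η₂ hs.ne')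
      = (gaussianReal (η₂ * μ₁ - η₁ * μ₂) ((η₁ ^ 2 + η₂ ^ 2).toNNReal)).prod
          (gaussianReal (η₁ * μ₁ + η₂ * μ₂) ((η₁ ^ 2 + η₂ ^ 2).toNNReal)) := by
  have hv : (η₁ ^ 2 + η₂ ^ 2).toNNReal ≠ 0 := by
    simp only [ne_eq, Real.toNNReal_eq_zero, not_le]; exact hs
  rw [gauss_prod_withDensity μ₁ μ₂ 1 1 one_ne_zero one_ne_zero,
    withDensity_map_equiv, volume_map_rotEquiv η₁ η₂ hs,
    withDensity_smul_measure, gauss_prod_withDensity _ _ _ _ hv hv,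
    ← withDensity_smul' _ _ ENNReal.ofReal_ne_top]
  congr 1
  funext w
  show ENNReal.ofReal (η₁ ^ 2 + η₂ ^ 2)⁻¹ *
      (gaussianPDF μ₁ 1 ((rotEquiv η₁ η₂ hs.ne').symm w).1 *
       gaussianPDF μ₂ 1 ((rotEquiv η₁ η₂ hs.ne').symm w).2) = _
  have hsymm : ((rotEquiv η₁ η₂ hs.ne').symm w) =
      ((η₁ * w.2 + η₂ * w.1) / (η₁ ^ 2 + η₂ ^ 2),
       (η₂ * w.2 - η₁ * w.1) / (η₁ ^ 2 + η₂ ^ 2)) := rfl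
  rw [hsymm]
  simp only [gaussianPDF]
  rw [← ENNReal.ofReal_mul (gaussianPDFReal_nonneg _ _ _),
    ← ENNReal.ofReal_mul (by positivity),
    pdf_identity μ₁ μ₂ η₁ η₂ hs w,
    ENNReal.ofReal_mul (gaussianPDFReal_nonneg _ _ _)]

end SelectiveAux

/-- The selective z-test has level 0.05: if `Z = (Z₁, Z₂) ~ N(μ, I₂)` truncated to
`{z₁ ∈ A}`, the null `η·μ = δ` holds, and the test rejects when `D = η·Z` falls below
the 0.025-quantile or above the 0.975-quantile of the `N(δ, ‖η‖²)` distribution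
truncated to `(‖η‖²A - η₂M)/η₁` (with `M = η⊥·Z`), then the rejection probability is
exactly 0.05. -/
theorem selective_z_test_level (μ₁ μ₂ η₁ η₂ δ : ℝ) (hη₁ : η₁ ≠ 0)
    (hnull : η₁ * μ₁ + η₂ * μ₂ = δ)
    (A : Set ℝ) (hA : MeasurableSet A) (hApos : 0 < gaussianReal μ₁ 1 A)
    (μZ : Measure (ℝ × ℝ))
    (hμZ : μZ = truncTo2 ((gaussianReal μ₁ 1).prod (gaussianReal μ₂ 1)) {z | z.1 ∈ A})
    (ν : ℝ → Measure ℝ)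
    (hν : ν = fun m => truncTo (gaussianReal δ ((η₁ ^ 2 + η₂ ^ 2).toNNReal))
      {d | (η₁ * d + η₂ * m) / (η₁ ^ 2 + η₂ ^ 2) ∈ A}) :
    μZ {z | η₁ * z.1 + η₂ * z.2 < quantile (ν (η₂ * z.1 - η₁ * z.2)) 0.025 ∨
            quantile (ν (η₂ * z.1 - η₁ * z.2)) 0.975 < η₁ * z.1 + η₂ * z.2}
      = ENNReal.ofReal 0.05 := by
  open SelectiveAux in
  subst hnull hμZ hν
  have hs : 0 < η₁ ^ 2 + η₂ ^ 2 := by positivity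
  have hv : (η₁ ^ 2 + η₂ ^ 2).toNNReal ≠ 0 := by
    simp only [ne_eq, Real.toNNReal_eq_zero, not_le]; exact hs
  set γ := (gaussianReal μ₁ 1).prod (gaussianReal μ₂ 1) with hγ
  set gaussM := gaussianReal (η₂ * μ₁ - η₁ * μ₂) ((η₁ ^ 2 + η₂ ^ 2).toNNReal) with hgM
  set gaussD := gaussianReal (η₁ * μ₁ + η₂ * μ₂) ((η₁ ^ 2 + η₂ ^ 2).toNNReal) with hgD
  haveI : MeasureTheory.NullSingletonClass gaussD :=
    ⟨fun x => gaussianReal_absolutelyContinuous _ hv (measure_singleton x)⟩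
  set e := SelectiveAux.rotEquiv η₁ η₂ hs.ne' with he
  set S : Set (ℝ × ℝ) := {w | (η₁ * w.2 + η₂ * w.1) / (η₁ ^ 2 + η₂ ^ 2) ∈ A} with hSdef
  have hS : MeasurableSet S :=
    (measurable_const.mul measurable_snd |>.add
      (measurable_const.mul measurable_fst) |>.div_const _) hA
  set Q₁ : ℝ → ℝ := fun m => quantile ((gaussD (Prod.mk m ⁻¹' S))⁻¹ •
    gaussD.restrict (Prod.mk m ⁻¹' S)) 0.025 with hQ₁
  set Q₂ : ℝ → ℝ := fun m => quantile ((gaussD (Prod.mk m ⁻¹' S))⁻¹ •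
    gaussD.restrict (Prod.mk m ⁻¹' S)) 0.975 with hQ₂
  have hQ₁m : Measurable Q₁ :=
    SelectiveAux.measurable_quantile_section gaussD hS (by norm_num) (by norm_num)
  have hQ₂m : Measurable Q₂ :=
    SelectiveAux.measurable_quantile_section gaussD hS (by norm_num) (by norm_num)
  set R : Set (ℝ × ℝ) := {w | w.2 < Q₁ w.1 ∨ Q₂ w.1 < w.2} with hRdef
  have hR : MeasurableSet R :=
    (measurableSet_lt measurable_snd (hQ₁m.comp measurable_fst)).union
      (measurableSet_lt (hQ₂m.comp measurable_fst) measurable_snd)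
  -- the truncation set, in the original coordinates
  have hez : ∀ z : ℝ × ℝ, (⇑e) z = (η₂ * z.1 - η₁ * z.2, η₁ * z.1 + η₂ * z.2) := fun z => rfl
  have hpre1 : {z : ℝ × ℝ | z.1 ∈ A} = ⇑e ⁻¹' S := by
    ext z
    simp only [Set.mem_setOf_eq, Set.mem_preimage, hSdef, hez]
    have : (η₁ * (η₁ * z.1 + η₂ * z.2) + η₂ * (η₂ * z.1 - η₁ * z.2)) / (η₁ ^ 2 + η₂ ^ 2)
        = z.1 := by field_simp; ring
    rw [this]
  -- the rejection set, in the original coordinates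
  have hpre2 : {z : ℝ × ℝ | η₁ * z.1 + η₂ * z.2 <
        quantile ((fun m => truncTo gaussD {d | (η₁ * d + η₂ * m) / (η₁ ^ 2 + η₂ ^ 2) ∈ A})
          (η₂ * z.1 - η₁ * z.2)) 0.025 ∨
      quantile ((fun m => truncTo gaussD {d | (η₁ * d + η₂ * m) / (η₁ ^ 2 + η₂ ^ 2) ∈ A})
          (η₂ * z.1 - η₁ * z.2)) 0.975 < η₁ * z.1 + η₂ * z.2}
      = ⇑e ⁻¹' R := by
    ext z
    simp only [Set.mem_setOf_eq, Set.mem_preimage, hRdef, truncTo]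
    rfl
  have hRejMeas : MeasurableSet (⇑e ⁻¹' R) := e.measurable hR
  have hmap : γ.map ⇑e = gaussM.prod gaussD := gaussian_prod_map μ₁ μ₂ η₁ η₂ hs
  have hγpre : ∀ X : Set (ℝ × ℝ), MeasurableSet X → γ (⇑e ⁻¹' X) = (gaussM.prod gaussD) X := by
    intro X hX
    rw [← hmap, Measure.map_apply e.measurable hX]
  -- positivity of the truncation probability
  have hAval : γ {z : ℝ × ℝ | z.1 ∈ A} = gaussianReal μ₁ 1 A := by
    have : {z : ℝ × ℝ | z.1 ∈ A} = A ×ˢ Set.univ := by ext z; simp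
    rw [this, hγ, Measure.prod_prod, measure_univ, mul_one]
  have hpos : γ {z : ℝ × ℝ | z.1 ∈ A} ≠ 0 := by rw [hAval]; exact hApos.ne'
  have hfin : γ {z : ℝ × ℝ | z.1 ∈ A} ≠ ⊤ := measure_ne_top _ _
  -- the key per-slice computation
  have hkey : ∀ m : ℝ, gaussD ((Set.Iio (Q₁ m) ∪ Set.Ioi (Q₂ m)) ∩ (Prod.mk m ⁻¹' S))
      = ENNReal.ofReal 0.05 * gaussD (Prod.mk m ⁻¹' S) := by
    intro m
    set Sm := Prod.mk m ⁻¹' S with hSm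
    by_cases h0 : gaussD Sm = 0
    · rw [le_antisymm ((measure_mono Set.inter_subset_right).trans h0.le) zero_le, h0,
        mul_zero]
    · haveI := SelectiveAux.truncTo_isProb gaussD h0
      haveI := SelectiveAux.truncTo_noAtoms gaussD (S := Sm) ((gaussD Sm)⁻¹)
      set νm := (gaussD Sm)⁻¹ • gaussD.restrict Sm with hνm
      have hq1 : νm (Set.Iio (Q₁ m)) = ENNReal.ofReal 0.025 :=
        SelectiveAux.measure_Iio_quantile νm (by norm_num) (by norm_num)
      have hq2 : νm (Set.Ioi (Q₂ m)) = ENNReal.ofReal 0.025 := by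
        have hIic : νm (Set.Iic (Q₂ m)) = ENNReal.ofReal 0.975 :=
          SelectiveAux.measure_Iic_quantile νm (by norm_num) (by norm_num)
        have : νm (Set.Iic (Q₂ m))ᶜ = νm Set.univ - νm (Set.Iic (Q₂ m)) :=
          measure_compl measurableSet_Iic (measure_ne_top _ _)
        rw [Set.compl_Iic] at this
        rw [this, hIic, measure_univ, ← ENNReal.ofReal_one, ← ENNReal.ofReal_sub _ (by norm_num)]
        norm_num
      have hmono : Q₁ m ≤ Q₂ m :=
        SelectiveAux.quantile_mono νm (by norm_num) (by norm_num) (by norm_num)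
      have hdisj : Disjoint (Set.Iio (Q₁ m)) (Set.Ioi (Q₂ m)) := by
        rw [Set.disjoint_left]
        intro x hx1 hx2
        simp only [Set.mem_Iio] at hx1
        simp only [Set.mem_Ioi] at hx2
        linarith
      have hunion : νm (Set.Iio (Q₁ m) ∪ Set.Ioi (Q₂ m)) = ENNReal.ofReal 0.05 := by
        rw [measure_union hdisj measurableSet_Ioi, hq1, hq2,
          ← ENNReal.ofReal_add (by norm_num) (by norm_num)]
        norm_num
      have hX : νm (Set.Iio (Q₁ m) ∪ Set.Ioi (Q₂ m))
          = (gaussD Sm)⁻¹ * gaussD ((Set.Iio (Q₁ m) ∪ Set.Ioi (Q₂ m)) ∩ Sm) := by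
        rw [hνm, Measure.smul_apply,
          Measure.restrict_apply (measurableSet_Iio.union measurableSet_Ioi), smul_eq_mul]
      have hfinSm := measure_ne_top gaussD Sm
      calc gaussD ((Set.Iio (Q₁ m) ∪ Set.Ioi (Q₂ m)) ∩ Sm)
          = gaussD Sm * ((gaussD Sm)⁻¹ * gaussD ((Set.Iio (Q₁ m) ∪ Set.Ioi (Q₂ m)) ∩ Sm)) := by
            rw [← mul_assoc, ENNReal.mul_inv_cancel h0 hfinSm, one_mul]
        _ = gaussD Sm * ENNReal.ofReal 0.05 := by rw [← hX, hunion]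
        _ = ENNReal.ofReal 0.05 * gaussD Sm := mul_comm _ _
  -- assembling
  show truncTo2 γ {z | z.1 ∈ A} _ = ENNReal.ofReal 0.05
  rw [truncTo2, hpre2, Measure.smul_apply,
    Measure.restrict_apply hRejMeas, smul_eq_mul, hpre1, ← Set.preimage_inter,
    hγpre _ (hR.inter hS)]
  have hfub : (gaussM.prod gaussD) (R ∩ S)
      = ENNReal.ofReal 0.05 * (gaussM.prod gaussD) S := by
    rw [Measure.prod_apply (hR.inter hS), Measure.prod_apply hS]
    have hsec : ∀ m : ℝ, Prod.mk m ⁻¹' (R ∩ S)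
        = (Set.Iio (Q₁ m) ∪ Set.Ioi (Q₂ m)) ∩ (Prod.mk m ⁻¹' S) := by
      intro m
      ext d
      simp only [Set.preimage_inter, Set.mem_inter_iff, Set.mem_preimage, hRdef,
        Set.mem_setOf_eq, Set.mem_union, Set.mem_Iio, Set.mem_Ioi]
    rw [← lintegral_const_mul _ (measurable_measure_prodMk_left hS)]
    refine lintegral_congr fun m => ?_
    rw [hsec m, hkey m]
  rw [hfub, ← hγpre S hS, ← hpre1, mul_comm (ENNReal.ofReal 0.05) _, ← mul_assoc,
    ENNReal.inv_mul_cancel hpos hfin, one_mul]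
end
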